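/- Let H be a finite class of functions h : [n] → ℝ and Z a uniformly random u-subset of [n]. Then E[ sup_{h∈H} ( (1/u) ∑_{i∈Z} h(i) − (1/n) ∑_{i=1}^n h(i) ) ] ≤ E[ sup_{h∈H} ( (1/u) ∑_{j=1}^{u} h(Y_j) − (1/n) ∑_{i=1}^n h(i) ) ], where Y₁,...,Y_u are i.i.d. uniform on [n]. -/

import Mathlib

open Finset

namespace SupWithout

variable (n u : ℕ)

/-- Hoeffding coupling weight. -/
noncomputable def w (Z : Finset (Fin n)) (Y : Fin u → Fin n) : ℝ :=
  if (univ.image Y) ⊆ Z then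
    (((n - (univ.image Y).card).choose (u - (univ.image Y).card) : ℝ))⁻¹ else 0

lemma w_nonneg (Z : Finset (Fin n)) (Y : Fin u → Fin n) : 0 ≤ w n u Z Y := by
  unfold w; split <;> positivity

lemma k_le (Y : Fin u → Fin n) : (univ.image Y).card ≤ u :=
  le_trans card_image_le (by simp)

lemma choose_pos (hun : u ≤ n) (Y : Fin u → Fin n) :
    0 < ((n - (univ.image Y).card).choose (u - (univ.image Y).card)) :=
  Nat.choose_pos (by have := k_le n u Y; omega)

/-- number of u-subsets containing a given set D -/
lemma card_supersets (D : Finset (Fin n)) (hD : D.card ≤ u) :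
    (((univ : Finset (Fin n)).powersetCard u).filter (fun Z => D ⊆ Z)).card
      = (n - D.card).choose (u - D.card) := by
  have : (((univ : Finset (Fin n)).powersetCard u).filter (fun Z => D ⊆ Z)).card
      = ((univ \ D).powersetCard (u - D.card)).card := by
    apply Finset.card_bij' (fun Z _ => Z \ D) (fun E _ => E ∪ D)
    · intro Z hZ
      simp only [mem_filter, mem_powersetCard] at hZ
      simp only [mem_powersetCard]
      exact ⟨sdiff_subset_sdiff hZ.1.1 le_rfl, by rw [card_sdiff_of_subset hZ.2, hZ.1.2]⟩
    · intro E hE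
      simp only [mem_powersetCard] at hE
      simp only [mem_filter, mem_powersetCard]
      have hdisj : Disjoint E D := disjoint_of_subset_left hE.1 sdiff_disjoint
      refine ⟨⟨subset_univ _, ?_⟩, subset_union_right⟩
      rw [card_union_of_disjoint hdisj, hE.2]
      omega
    · intro Z hZ
      simp only [mem_filter] at hZ
      exact sdiff_union_of_subset hZ.2
    · intro E hE
      simp only [mem_powersetCard] at hE
      exact union_sdiff_cancel_right (disjoint_of_subset_left hE.1 sdiff_disjoint)
  rw [this, card_powersetCard, card_sdiff_of_subset (subset_univ D), card_univ, Fintype.card_fin]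

lemma sum_w_Z (hun : u ≤ n) (Y : Fin u → Fin n) :
    ∑ Z ∈ (univ : Finset (Fin n)).powersetCard u, w n u Z Y = 1 := by
  unfold w
  rw [← Finset.sum_filter]
  rw [Finset.sum_const, card_supersets n u _ (k_le n u Y)]
  rw [nsmul_eq_mul]
  rw [mul_inv_cancel₀]
  exact_mod_cast (choose_pos n u hun Y).ne'

lemma w_perm {Z Z' : Finset (Fin n)} (σ : Equiv.Perm (Fin n))
    (hσ : ∀ x, x ∈ Z ↔ σ x ∈ Z') (Y : Fin u → Fin n) :
    w n u Z' (σ ∘ Y) = w n u Z Y := by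
  unfold w
  have himg : univ.image (σ ∘ Y) = (univ.image Y).image σ := by
    rw [Finset.image_image]
  have hcard : ((univ.image Y).image σ).card = (univ.image Y).card :=
    Finset.card_image_of_injective _ σ.injective
  have hsub : ((univ.image Y).image σ ⊆ Z') ↔ (univ.image Y ⊆ Z) := by
    rw [Finset.image_subset_iff]
    constructor
    · intro h x hx; exact (hσ x).2 (h x hx)
    · intro h x hx; exact (hσ x).1 (h hx)
  rw [himg, hcard]
  by_cases h : univ.image Y ⊆ Z
  · rw [if_pos (hsub.2 h), if_pos h]
  · rw [if_neg (fun hc => h (hsub.1 hc)), if_neg h]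

/-- existence of a permutation mapping Z to Z' -/
lemma exists_perm {Z Z' : Finset (Fin n)} (hc : Z.card = Z'.card) :
    ∃ σ : Equiv.Perm (Fin n), ∀ x, x ∈ Z ↔ σ x ∈ Z' := by
  have h1 : Fintype.card {x // x ∈ Z} = Fintype.card {x // x ∈ Z'} := by
    simp [Fintype.card_coe, hc]
  have h2 : Fintype.card {x // ¬ x ∈ Z} = Fintype.card {x // ¬ x ∈ Z'} := by
    rw [Fintype.card_subtype_compl, Fintype.card_subtype_compl]
    simp [Fintype.card_coe, hc]
  let e1 := Fintype.equivOfCardEq h1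
  let e2 := Fintype.equivOfCardEq h2
  refine ⟨Equiv.subtypeCongr e1 e2, fun x => ?_⟩
  constructor
  · intro hx
    rw [Equiv.subtypeCongr, Equiv.trans_apply,
      Equiv.sumCompl_symm_apply_of_pos hx]
    simp
  · intro hx
    by_contra hxZ
    rw [Equiv.subtypeCongr, Equiv.trans_apply,
      Equiv.sumCompl_symm_apply_of_neg hxZ] at hx
    simp at hx
    exact (e2 ⟨x, hxZ⟩).2 hx

/-- total weight per Z -/
noncomputable def S (Z : Finset (Fin n)) : ℝ := ∑ Y : Fin u → Fin n, w n u Z Y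

lemma S_nonneg (Z : Finset (Fin n)) : 0 ≤ S n u Z :=
  Finset.sum_nonneg fun Y _ => w_nonneg n u Z Y

lemma S_const {Z Z' : Finset (Fin n)} (hc : Z.card = Z'.card) :
    S n u Z = S n u Z' := by
  obtain ⟨σ, hσ⟩ := exists_perm n (Z := Z) (Z' := Z') hc
  unfold S
  exact Fintype.sum_equiv (Equiv.arrowCongr (Equiv.refl (Fin u)) σ) _ _
    (fun Y => (w_perm n u σ hσ Y).symm)

lemma S_val (hun : u ≤ n) {Z : Finset (Fin n)}
    (hZ : Z ∈ (univ : Finset (Fin n)).powersetCard u) :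
    S n u Z * (n.choose u : ℝ) = (n : ℝ) ^ u := by
  have key : ∑ Z' ∈ (univ : Finset (Fin n)).powersetCard u, S n u Z' = (n:ℝ)^u := by
    unfold S
    rw [Finset.sum_comm]
    have : ∀ Y : Fin u → Fin n,
        ∑ Z' ∈ (univ : Finset (Fin n)).powersetCard u, w n u Z' Y = 1 :=
      sum_w_Z n u hun
    rw [Finset.sum_congr rfl (fun Y _ => this Y)]
    simp [Finset.card_univ]
  have hconst : ∀ Z' ∈ (univ : Finset (Fin n)).powersetCard u, S n u Z' = S n u Z := by
    intro Z' hZ'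
    rw [mem_powersetCard] at hZ hZ'
    exact S_const n u (hZ'.2.trans hZ.2.symm)
  rw [Finset.sum_congr rfl hconst, Finset.sum_const, nsmul_eq_mul,
    card_powersetCard, card_univ, Fintype.card_fin] at key
  rw [mul_comm]; exact key

/-- count of j with Y j = i -/
def cnt (Y : Fin u → Fin n) (i : Fin n) : ℕ := (univ.filter (fun j => Y j = i)).card

lemma cnt_eq_zero {Z : Finset (Fin n)} {Y : Fin u → Fin n} {i : Fin n}
    (hY : univ.image Y ⊆ Z) (hi : i ∉ Z) : cnt n u Y i = 0 := by
  unfold cnt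
  rw [Finset.card_eq_zero, Finset.filter_eq_empty_iff]
  intro j _ hj
  exact hi (hY (Finset.mem_image.2 ⟨j, mem_univ j, hj⟩))

lemma sum_cnt_univ (Y : Fin u → Fin n) : ∑ i, (cnt n u Y i : ℝ) = u := by
  have : (univ : Finset (Fin u)).card = ∑ i, cnt n u Y i :=
    Finset.card_eq_sum_card_fiberwise (fun j _ => mem_univ (Y j))
  have h2 : ∑ i, cnt n u Y i = u := by
    rw [← this, card_univ, Fintype.card_fin]
  exact_mod_cast congrArg (Nat.cast : ℕ → ℝ) h2

lemma sum_cnt_Z {Z : Finset (Fin n)} {Y : Fin u → Fin n}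
    (hY : univ.image Y ⊆ Z) : ∑ i ∈ Z, (cnt n u Y i : ℝ) = u := by
  rw [← sum_cnt_univ n u Y]
  apply Finset.sum_subset (subset_univ Z)
  intro i _ hi
  rw [cnt_eq_zero n u hY hi]; norm_num

lemma cnt_comp_perm (σ : Equiv.Perm (Fin n)) (Y : Fin u → Fin n) (i : Fin n) :
    cnt n u (σ ∘ Y) i = cnt n u Y (σ.symm i) := by
  unfold cnt
  congr 1
  apply Finset.filter_congr
  intro j _
  simp [Equiv.eq_symm_apply, eq_comm]

/-- conditional count sum -/
noncomputable def c (Z : Finset (Fin n)) (i : Fin n) : ℝ :=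
  ∑ Y : Fin u → Fin n, w n u Z Y * (cnt n u Y i : ℝ)

lemma c_eq_zero {Z : Finset (Fin n)} {i : Fin n} (hi : i ∉ Z) : c n u Z i = 0 := by
  unfold c
  apply Finset.sum_eq_zero
  intro Y _
  unfold w
  split
  · rename_i h; rw [cnt_eq_zero n u h hi]; norm_num
  · ring

lemma c_symm {Z : Finset (Fin n)} {i i' : Fin n} (hi : i ∈ Z) (hi' : i' ∈ Z) :
    c n u Z i = c n u Z i' := by
  unfold c
  have hσ : ∀ x, x ∈ Z ↔ (Equiv.swap i i') x ∈ Z := by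
    intro x
    rcases eq_or_ne x i with rfl | hxi
    · simp [Equiv.swap_apply_left, hi, hi']
    rcases eq_or_ne x i' with rfl | hxi'
    · simp [Equiv.swap_apply_right, hi, hi']
    · rw [Equiv.swap_apply_of_ne_of_ne hxi hxi']
  apply Fintype.sum_equiv (Equiv.arrowCongr (Equiv.refl (Fin u)) (Equiv.swap i i'))
  intro Y
  have h1 : w n u Z ((Equiv.swap i i') ∘ Y) = w n u Z Y := w_perm n u _ hσ Y
  have h2 : cnt n u ((Equiv.swap i i') ∘ Y) i' = cnt n u Y i := by
    rw [cnt_comp_perm]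
    congr 1
    simp [Equiv.symm_swap, Equiv.swap_apply_right]
  have : (Equiv.arrowCongr (Equiv.refl (Fin u)) (Equiv.swap i i')) Y
      = (Equiv.swap i i') ∘ Y := rfl
  rw [this, h1, h2]

lemma sum_c (hu : 0 < u) {Z : Finset (Fin n)}
    (hZ : Z ∈ (univ : Finset (Fin n)).powersetCard u) :
    ∑ i ∈ Z, c n u Z i = u * S n u Z := by
  unfold c S
  rw [Finset.sum_comm]
  rw [mul_comm, Finset.sum_mul]
  apply Finset.sum_congr rfl
  intro Y _
  rw [← Finset.mul_sum]
  by_cases h : univ.image Y ⊆ Z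
  · rw [sum_cnt_Z n u h]
  · have : w n u Z Y = 0 := by unfold w; rw [if_neg h]
    rw [this]; ring

lemma c_eq_S (hu : 0 < u) {Z : Finset (Fin n)} {i : Fin n}
    (hZ : Z ∈ (univ : Finset (Fin n)).powersetCard u) (hi : i ∈ Z) :
    c n u Z i = S n u Z := by
  have hcard : Z.card = u := (mem_powersetCard.1 hZ).2
  have hsum : ∑ i' ∈ Z, c n u Z i' = Z.card * c n u Z i := by
    rw [Finset.sum_congr rfl (fun i' hi' => c_symm n u hi' hi), Finset.sum_const,
      nsmul_eq_mul]
  rw [sum_c n u hu hZ, hcard] at hsum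
  have hu' : (u : ℝ) ≠ 0 := by positivity
  exact (mul_left_cancel₀ hu' hsum).symm

/-- the key linear identity -/
lemma linear_id (hu : 0 < u) (hn : 0 < n) {Z : Finset (Fin n)}
    (hZ : Z ∈ (univ : Finset (Fin n)).powersetCard u) (h : Fin n → ℝ) :
    ∑ Y : Fin u → Fin n, w n u Z Y * ((∑ j, h (Y j)) / (u:ℝ) - (∑ i, h i) / (n:ℝ))
      = S n u Z * ((∑ i ∈ Z, h i) / (u:ℝ) - (∑ i, h i) / (n:ℝ)) := by
  have hfib : ∀ Y : Fin u → Fin n, ∑ j, h (Y j) = ∑ i, (cnt n u Y i : ℝ) * h i := by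
    intro Y
    rw [← Finset.sum_fiberwise (univ : Finset (Fin u)) Y (fun j => h (Y j))]
    apply Finset.sum_congr rfl
    intro i _
    rw [Finset.sum_congr rfl (g := fun _ => h i) (fun j hj => by
      rw [mem_filter] at hj; rw [hj.2]), Finset.sum_const, nsmul_eq_mul]
    rfl
  have key : ∑ Y : Fin u → Fin n, w n u Z Y * (∑ j, h (Y j))
      = S n u Z * (∑ i ∈ Z, h i) := by
    calc ∑ Y : Fin u → Fin n, w n u Z Y * (∑ j, h (Y j))
        = ∑ Y : Fin u → Fin n, ∑ i, w n u Z Y * ((cnt n u Y i : ℝ) * h i) := by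
          apply Finset.sum_congr rfl; intro Y _; rw [hfib Y, Finset.mul_sum]
      _ = ∑ i, (∑ Y : Fin u → Fin n, w n u Z Y * (cnt n u Y i : ℝ)) * h i := by
          rw [Finset.sum_comm]
          apply Finset.sum_congr rfl; intro i _
          rw [Finset.sum_mul]
          apply Finset.sum_congr rfl; intro Y _; ring
      _ = ∑ i, c n u Z i * h i := rfl
      _ = ∑ i ∈ Z, c n u Z i * h i := by
          symm
          apply Finset.sum_subset (subset_univ Z)
          intro i _ hi
          rw [c_eq_zero n u hi]; ring
      _ = ∑ i ∈ Z, S n u Z * h i := by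
          apply Finset.sum_congr rfl; intro i hi
          rw [c_eq_S n u hu hZ hi]
      _ = S n u Z * (∑ i ∈ Z, h i) := by rw [Finset.mul_sum]
  have hS : ∑ Y : Fin u → Fin n, w n u Z Y = S n u Z := rfl
  calc ∑ Y : Fin u → Fin n, w n u Z Y * ((∑ j, h (Y j)) / (u:ℝ) - (∑ i, h i) / (n:ℝ))
      = (∑ Y : Fin u → Fin n, w n u Z Y * (∑ j, h (Y j))) / (u:ℝ)
        - (∑ Y : Fin u → Fin n, w n u Z Y) * ((∑ i, h i) / (n:ℝ)) := by
        simp only [mul_sub, Finset.sum_sub_distrib, Finset.sum_div, Finset.sum_mul,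
          mul_div_assoc]
    _ = S n u Z * ((∑ i ∈ Z, h i) / (u:ℝ) - (∑ i, h i) / (n:ℝ)) := by
        rw [key, hS]; ring

end SupWithout

open SupWithout in
/-- Comparison of suprema of centered empirical means under sampling without
replacement vs. with replacement. -/
theorem sup_without_le_sup_with (n u : ℕ) (hn : 0 < n) (hu : 0 < u) (hun : u ≤ n)
    (H : Finset (Fin n → ℝ)) (hH : H.Nonempty) :
    (∑ Z ∈ (Finset.univ : Finset (Fin n)).powersetCard u,
        H.sup' hH (fun h => (∑ i ∈ Z, h i) / (u : ℝ) - (∑ i, h i) / (n : ℝ)))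
      / (((Finset.univ : Finset (Fin n)).powersetCard u).card : ℝ)
    ≤ (∑ Y : Fin u → Fin n,
        H.sup' hH (fun h => (∑ j, h (Y j)) / (u : ℝ) - (∑ i, h i) / (n : ℝ)))
      / ((n : ℝ) ^ u) := by
  set 𝒵 := (Finset.univ : Finset (Fin n)).powersetCard u with h𝒵
  set supZ := fun Z : Finset (Fin n) =>
    H.sup' hH (fun h => (∑ i ∈ Z, h i) / (u : ℝ) - (∑ i, h i) / (n : ℝ)) with hsupZ
  set supY := fun Y : Fin u → Fin n =>
    H.sup' hH (fun h => (∑ j, h (Y j)) / (u : ℝ) - (∑ i, h i) / (n : ℝ)) with hsupY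
  -- per-Z inequality
  have perZ : ∀ Z ∈ 𝒵, S n u Z * supZ Z ≤ ∑ Y : Fin u → Fin n, w n u Z Y * supY Y := by
    intro Z hZ
    simp only [hsupZ, hsupY]
    obtain ⟨h0, hh0, hEq⟩ := Finset.exists_mem_eq_sup' hH
      (fun h => (∑ i ∈ Z, h i) / (u : ℝ) - (∑ i, h i) / (n : ℝ))
    rw [hEq, ← linear_id n u hu hn hZ h0]
    apply Finset.sum_le_sum
    intro Y _
    exact mul_le_mul_of_nonneg_left
      (Finset.le_sup' (fun h : Fin n → ℝ =>
        (∑ j, h (Y j)) / (u:ℝ) - (∑ i, h i) / (n:ℝ)) hh0) (w_nonneg n u Z Y)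
  -- sum over Z
  have main : ∀ Z ∈ 𝒵, ((n:ℝ)^u / (n.choose u : ℝ)) * supZ Z
      ≤ ∑ Y : Fin u → Fin n, w n u Z Y * supY Y := by
    intro Z hZ
    have hSv := S_val n u hun hZ
    have hchoose : (0:ℝ) < (n.choose u : ℝ) := by
      exact_mod_cast Nat.choose_pos hun
    have : S n u Z = (n:ℝ)^u / (n.choose u : ℝ) := by
      field_simp at hSv ⊢; linarith [hSv]
    rw [← this]
    exact perZ Z hZ
  have total : ((n:ℝ)^u / (n.choose u : ℝ)) * (∑ Z ∈ 𝒵, supZ Z)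
      ≤ ∑ Y : Fin u → Fin n, supY Y := by
    rw [Finset.mul_sum]
    calc ∑ Z ∈ 𝒵, ((n:ℝ)^u / (n.choose u : ℝ)) * supZ Z
        ≤ ∑ Z ∈ 𝒵, ∑ Y : Fin u → Fin n, w n u Z Y * supY Y :=
          Finset.sum_le_sum main
      _ = ∑ Y : Fin u → Fin n, (∑ Z ∈ 𝒵, w n u Z Y) * supY Y := by
          rw [Finset.sum_comm]
          apply Finset.sum_congr rfl; intro Y _; rw [Finset.sum_mul]
      _ = ∑ Y : Fin u → Fin n, supY Y := by
          apply Finset.sum_congr rfl; intro Y _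
          rw [sum_w_Z n u hun Y, one_mul]
  have hcard𝒵 : (𝒵.card : ℝ) = (n.choose u : ℝ) := by
    rw [h𝒵, card_powersetCard, card_univ, Fintype.card_fin]
  have hchoose : (0:ℝ) < (n.choose u : ℝ) := by exact_mod_cast Nat.choose_pos hun
  have hnu : (0:ℝ) < (n:ℝ)^u := by positivity
  rw [hcard𝒵, div_le_div_iff₀ hchoose hnu]
  calc (∑ Z ∈ 𝒵, supZ Z) * (n:ℝ)^u
      = ((n:ℝ)^u / (n.choose u : ℝ)) * (∑ Z ∈ 𝒵, supZ Z) * (n.choose u : ℝ) := by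
        field_simp
    _ ≤ (∑ Y : Fin u → Fin n, supY Y) * (n.choose u : ℝ) :=
        mul_le_mul_of_nonneg_right total hchoose.le
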